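/- Let I ⊂ R^k be compact and let H be a class of functions from I to R with ‖h‖_{L²(I)} ≤ M for all h ∈ H. For γ > 0 and an integer R ≥ 1, define E_{R,H,γ} = {Σ_{i=1}^R α_i h_i : h_i ∈ H, Σ_{i=1}^R |α_i| ≤ γ}. Then for any ε_1, ε_2 > 0, the covering number satisfies N(ε_1 + ε_2, E_{R,H,γ}, ‖·‖_{L²(I)}) ≤ { (e(Mγ + 2ε_2)/ε_2) × N(ε_1/γ, H, ‖·‖_{L²(I)}) }^R. -/

import Mathlib

open MeasureTheory
open scoped ENNReal

noncomputable section

/-- The `L²(S)` distance between two functions. -/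
def L2dist {α : Type*} [MeasureSpace α] (S : Set α) (f g : α → ℝ) : ℝ :=
  Real.sqrt (∫ x in S, (f x - g x) ^ 2)

/-- The `ε`-covering number of `T` with respect to the (pseudo-)distance `ρ`: the smallest
cardinality of a finite subset `T' ⊆ T` such that every `t ∈ T` is within distance `ε` of
some `t' ∈ T'`; it is `∞` if no finite cover exists. -/
def covN {β : Type*} (ρ : β → β → ℝ) (ε : ℝ) (T : Set β) : ℝ≥0∞ :=
  sInf ((fun F : Finset β => (F.card : ℝ≥0∞)) ''
    {F : Finset β | ↑F ⊆ T ∧ ∀ t ∈ T, ∃ t' ∈ F, ρ t t' ≤ ε})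

/-- `eLpNorm` at `p = 2` as `ofReal` of the square-root of the integral of the square. -/
lemma eLpNorm_two_eq_ofReal_sqrt {α : Type*} [MeasurableSpace α] {μ : Measure α} {f : α → ℝ}
    (hf : MemLp f 2 μ) :
    eLpNorm f 2 μ = ENNReal.ofReal (Real.sqrt (∫ x, f x ^ 2 ∂μ)) := by
  have h2 : (2 : ℝ≥0∞).toReal = (2 : ℝ) := by simp
  set L : ℝ≥0∞ := ∫⁻ x, (‖f x‖₊ : ℝ≥0∞) ^ (2 : ℝ) ∂μ with hL
  have hsnorm : eLpNorm f 2 μ = L ^ (1/2 : ℝ) := by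
    rw [eLpNorm_eq_lintegral_rpow_enorm_toReal (by norm_num) (by norm_num), h2, hL]
    simp only [enorm_eq_nnnorm]
  have hLtop : L ≠ ⊤ := by
    have := hf.2
    rw [hsnorm] at this
    intro h
    rw [h] at this
    simp [ENNReal.top_rpow_of_pos] at this
  have hint : ∫ x, f x ^ 2 ∂μ = L.toReal := by
    rw [integral_eq_lintegral_of_nonneg_ae (Filter.Eventually.of_forall fun x => sq_nonneg _)
      ((hf.1.aemeasurable.pow_const 2).aestronglyMeasurable)]
    congr 1
    refine lintegral_congr fun x => ?_
    rw [show ((2:ℝ)) = ((2:ℕ):ℝ) by norm_num, ENNReal.rpow_natCast]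
    rw [← enorm_eq_nnnorm, ← ofReal_norm, ← ENNReal.ofReal_pow (norm_nonneg _)]
    congr 1
    rw [Real.norm_eq_abs, sq_abs]
  rw [hsnorm, hint, Real.sqrt_eq_rpow, ENNReal.toReal_rpow,
    ENNReal.ofReal_toReal]
  exact (ENNReal.rpow_ne_top_of_nonneg (by norm_num) hLtop)

lemma covN_le_card {β : Type*} {ρ : β → β → ℝ} {ε : ℝ} {T : Set β} (F : Finset β)
    (h1 : ↑F ⊆ T) (h2 : ∀ t ∈ T, ∃ t' ∈ F, ρ t t' ≤ ε) :
    covN ρ ε T ≤ F.card :=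
  sInf_le ⟨F, ⟨h1, h2⟩, rfl⟩

lemma covN_attained {β : Type*} {ρ : β → β → ℝ} {ε : ℝ} {T : Set β}
    (h : covN ρ ε T ≠ ⊤) :
    ∃ F : Finset β, ↑F ⊆ T ∧ (∀ t ∈ T, ∃ t' ∈ F, ρ t t' ≤ ε) ∧
      (F.card : ℝ≥0∞) = covN ρ ε T := by
  classical
  set G := {F : Finset β | ↑F ⊆ T ∧ ∀ t ∈ T, ∃ t' ∈ F, ρ t t' ≤ ε} with hG
  have hGne : G.Nonempty := by
    by_contra hempty
    rw [Set.not_nonempty_iff_eq_empty] at hempty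
    apply h
    simp [covN, ← hG, hempty]
  set C : Set ℕ := {n | ∃ F ∈ G, F.card = n} with hC
  have hCne : C.Nonempty := ⟨hGne.choose.card, hGne.choose, hGne.choose_spec, rfl⟩
  obtain ⟨F, hFG, hFcard⟩ := Nat.sInf_mem hCne
  refine ⟨F, hFG.1, hFG.2, le_antisymm ?_ (covN_le_card F hFG.1 hFG.2)⟩
  refine le_sInf fun b hb => ?_
  obtain ⟨F', hF'G, rfl⟩ := hb
  have : sInf C ≤ F'.card := Nat.sInf_le ⟨F', hF'G, rfl⟩
  show (F.card : ℝ≥0∞) ≤ (F'.card : ℝ≥0∞)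
  rw [hFcard]
  exact_mod_cast this

lemma one_le_covN {β : Type*} {ρ : β → β → ℝ} {ε : ℝ} {T : Set β} (hT : T.Nonempty) :
    1 ≤ covN ρ ε T := by
  refine le_sInf fun b hb => ?_
  obtain ⟨F, hF, rfl⟩ := hb
  obtain ⟨t, ht⟩ := hT
  obtain ⟨t', ht', -⟩ := hF.2 t ht
  have : 0 < F.card := Finset.card_pos.2 ⟨t', ht'⟩
  show (1 : ℝ≥0∞) ≤ (F.card : ℝ≥0∞)
  exact_mod_cast this

open Metric in
/-- Internal covering of a ball in a finite-dimensional normed space via packing. -/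
lemma exists_packing_cover (E : Type*) [NormedAddCommGroup E] [NormedSpace ℝ E]
    [MeasurableSpace E] [BorelSpace E] [FiniteDimensional ℝ E]
    (μ : Measure E) [μ.IsAddHaarMeasure]
    {γ r : ℝ} (hγ : 0 < γ) (hr : 0 < r) :
    ∃ A : Finset E, ↑A ⊆ closedBall (0:E) γ ∧
      (∀ x ∈ closedBall (0:E) γ, ∃ b ∈ A, dist x b ≤ r) ∧
      (A.card : ℝ) ≤ ((2*γ + r)/r) ^ (Module.finrank ℝ E) := by
  classical
  set d := Module.finrank ℝ E with hd
  set B : ℝ := ((2*γ + r)/r) ^ d with hB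
  set c := μ (ball (0:E) 1) with hc
  have hc0 : c ≠ 0 := (measure_ball_pos μ 0 one_pos).ne'
  have hctop : c ≠ ⊤ := measure_ball_lt_top.ne
  have cardbound : ∀ S : Finset E, ↑S ⊆ closedBall (0:E) γ →
      (∀ x ∈ S, ∀ y ∈ S, x ≠ y → r < dist x y) → (S.card : ℝ) ≤ B := by
    intro S hSsub hSsep
    have hdisj : (↑S : Set E).PairwiseDisjoint (fun s => closedBall s (r/2)) := by
      intro x hx y hy hxy
      exact closedBall_disjoint_closedBall (by linarith [hSsep x hx y hy hxy])
    have hmeas : μ (⋃ s ∈ S, closedBall s (r/2)) = ∑ s ∈ S, μ (closedBall s (r/2)) :=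
      measure_biUnion_finset hdisj fun s _ => measurableSet_closedBall
    have hballs : ∀ s : E, μ (closedBall s (r/2)) = ENNReal.ofReal ((r/2)^d) * c :=
      fun s => Measure.addHaar_closedBall μ s (by linarith)
    have hsub : (⋃ s ∈ S, closedBall s (r/2)) ⊆ closedBall (0:E) (γ + r/2) := by
      refine Set.iUnion₂_subset fun s hs => closedBall_subset_closedBall' ?_
      have := hSsub hs
      rw [mem_closedBall] at this
      linarith
    have key : (S.card : ℝ≥0∞) * (ENNReal.ofReal ((r/2)^d) * c) ≤
        ENNReal.ofReal ((γ + r/2)^d) * c := by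
      calc (S.card : ℝ≥0∞) * (ENNReal.ofReal ((r/2)^d) * c)
          = ∑ s ∈ S, μ (closedBall s (r/2)) := by
            rw [Finset.sum_congr rfl fun s _ => hballs s, Finset.sum_const, nsmul_eq_mul]
        _ = μ (⋃ s ∈ S, closedBall s (r/2)) := hmeas.symm
        _ ≤ μ (closedBall (0:E) (γ + r/2)) := measure_mono hsub
        _ = ENNReal.ofReal ((γ + r/2)^d) * c := Measure.addHaar_closedBall μ 0 (by linarith)
    rw [← mul_assoc] at key
    have key2 : (S.card : ℝ≥0∞) * ENNReal.ofReal ((r/2)^d) ≤ ENNReal.ofReal ((γ + r/2)^d) :=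
      (ENNReal.mul_le_mul_iff_left hc0 hctop).1 key
    have hrd : (0:ℝ) < (r/2)^d := pow_pos (by linarith) d
    rw [← ENNReal.ofReal_natCast, ← ENNReal.ofReal_mul (by positivity)] at key2
    rw [ENNReal.ofReal_le_ofReal_iff (by positivity)] at key2
    have : (S.card : ℝ) ≤ (γ + r/2)^d / (r/2)^d := by
      rw [le_div_iff₀ hrd]; exact key2
    calc (S.card : ℝ) ≤ (γ + r/2)^d / (r/2)^d := this
      _ = ((γ + r/2)/(r/2))^d := (div_pow _ _ _).symm
      _ = B := by rw [hB]; congr 1; field_simp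
  set C : Set ℕ := {n | ∃ S : Finset E, (↑S ⊆ closedBall (0:E) γ ∧
      ∀ x ∈ S, ∀ y ∈ S, x ≠ y → r < dist x y) ∧ S.card = n} with hCdef
  have hCne : C.Nonempty := ⟨0, ∅, ⟨by simp, by simp⟩, rfl⟩
  have hCbdd : BddAbove C := by
    refine ⟨Nat.floor B, fun n hn => ?_⟩
    obtain ⟨S, ⟨h1, h2⟩, rfl⟩ := hn
    exact Nat.le_floor (cardbound S h1 h2)
  obtain ⟨S, ⟨hSsub, hSsep⟩, hScard⟩ := Nat.sSup_mem hCne hCbdd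
  refine ⟨S, hSsub, ?_, cardbound S hSsub hSsep⟩
  intro x hx
  by_contra hcov
  push_neg at hcov
  have hxS : x ∉ S := by
    intro hxS
    have := hcov x hxS
    rw [dist_self] at this
    linarith
  have : S.card + 1 ∈ C := by
    refine ⟨insert x S, ⟨?_, ?_⟩, by rw [Finset.card_insert_of_notMem hxS]⟩
    · intro y hy
      rcases Finset.mem_insert.1 (by exact_mod_cast hy) with h | h
      · rwa [h]
      · exact hSsub h
    · intro y hy z hz hyz
      rcases Finset.mem_insert.1 hy with h1 | h1 <;> rcases Finset.mem_insert.1 hz with h2 | h2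
      · exact absurd (h1.trans h2.symm) hyz
      · rw [h1]; exact hcov z h2
      · rw [h2, dist_comm]; exact hcov y h1
      · exact hSsep y h1 z h2 hyz
  have := le_csSup hCbdd this
  omega

lemma dist_bound {α : Type*} [MeasurableSpace α] (μ : Measure α) {R : ℕ}
    (a b : Fin R → ℝ) (h c : Fin R → α → ℝ)
    (hh : ∀ i, MemLp (h i) 2 μ) (hc : ∀ i, MemLp (c i) 2 μ) :
    eLpNorm ((fun x => ∑ i, a i * h i x) - (fun x => ∑ i, b i * c i x)) 2 μ ≤
      ∑ i, ((‖a i‖₊ : ℝ≥0∞) * eLpNorm (h i - c i) 2 μ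
        + (‖a i - b i‖₊ : ℝ≥0∞) * eLpNorm (c i) 2 μ) := by
  have hrw : ((fun x => ∑ i, a i * h i x) - (fun x => ∑ i, b i * c i x))
      = ∑ i, (a i • (h i - c i) + (a i - b i) • c i) := by
    funext x
    simp only [Pi.sub_apply, Finset.sum_apply, Pi.add_apply, Pi.smul_apply, smul_eq_mul]
    rw [← Finset.sum_sub_distrib]
    exact Finset.sum_congr rfl fun i _ => by ring
  rw [hrw]
  refine le_trans (eLpNorm_sum_le (fun i _ => ?_) one_le_two)
    (Finset.sum_le_sum fun i _ => ?_)
  · exact ((((hh i).sub (hc i)).const_smul (a i)).add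
      ((hc i).const_smul (a i - b i))).aestronglyMeasurable
  · refine le_trans (eLpNorm_add_le (((hh i).sub (hc i)).const_smul (a i)).aestronglyMeasurable
      ((hc i).const_smul (a i - b i)).aestronglyMeasurable one_le_two) ?_
    rw [eLpNorm_const_smul, eLpNorm_const_smul, enorm_eq_nnnorm, enorm_eq_nnnorm]

instance piLpMS (R : ℕ) : MeasurableSpace (PiLp 1 fun _ : Fin R => ℝ) := borel _
instance piLpBS (R : ℕ) : BorelSpace (PiLp 1 fun _ : Fin R => ℝ) := ⟨rfl⟩

lemma piLp_one_norm {R : ℕ} (x : PiLp 1 fun _ : Fin R => ℝ) : ‖x‖ = ∑ i, |x i| := by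
  rw [PiLp.norm_eq_sum (by norm_num)]
  norm_num [Real.norm_eq_abs]

/-- **Covering number of `ℓ¹`-bounded linear combinations (Lemma
`cover_linear_combination_l1`).**  For a class `H` of functions in `L²(I)` with norms
bounded by `M`, and `E_{R,H,γ} = {Σ_{i=1}^R α_i h_i : h_i ∈ H, Σ_i |α_i| ≤ γ}`, one has for
all `ε₁, ε₂ > 0`:
`N(ε₁+ε₂, E_{R,H,γ}) ≤ {(e(Mγ + 2ε₂)/ε₂) ⬝ N(ε₁/γ, H)}^R`. -/
theorem covering_l1_combinations {k : ℕ} (I : Set (Fin k → ℝ)) (hI : IsCompact I)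
    (H : Set ((Fin k → ℝ) → ℝ)) (M : ℝ)
    (hH : ∀ h ∈ H, MemLp h 2 (volume.restrict I))
    (hM : ∀ h ∈ H, Real.sqrt (∫ x in I, (h x) ^ 2) ≤ M)
    (R : ℕ) (hR : 1 ≤ R) (γ : ℝ) (hγ : 0 < γ)
    (ε₁ ε₂ : ℝ) (hε₁ : 0 < ε₁) (hε₂ : 0 < ε₂) :
    covN (L2dist I) (ε₁ + ε₂)
        {f | ∃ (h : Fin R → (Fin k → ℝ) → ℝ) (a : Fin R → ℝ),
          (∀ i, h i ∈ H) ∧ (∑ i, |a i|) ≤ γ ∧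
          f = fun x => ∑ i, a i * h i x}
      ≤ (ENNReal.ofReal (Real.exp 1 * (M * γ + 2 * ε₂) / ε₂) *
          covN (L2dist I) (ε₁ / γ) H) ^ R := by
  classical
  have e2 : (2:ℝ) ≤ Real.exp 1 := by
    have := Real.add_one_le_exp 1
    linarith
  set T := {f | ∃ (h : Fin R → (Fin k → ℝ) → ℝ) (a : Fin R → ℝ),
      (∀ i, h i ∈ H) ∧ (∑ i, |a i|) ≤ γ ∧
      f = fun x => ∑ i, a i * h i x} with hT
  by_cases hHne : H.Nonempty
  swap
  · -- `H` is empty, hence so is the set of combinations.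
    have h0 : covN (L2dist I) (ε₁ + ε₂) T ≤ ((∅ : Finset ((Fin k → ℝ) → ℝ)).card : ℝ≥0∞) := by
      refine covN_le_card ∅ (by simp) fun t ht => ?_
      obtain ⟨h, a, hh, -, -⟩ := ht
      exact absurd ⟨h ⟨0, hR⟩, hh ⟨0, hR⟩⟩ hHne
    simp only [Finset.card_empty, Nat.cast_zero] at h0
    exact le_trans h0 zero_le
  obtain ⟨h₀, hh₀⟩ := hHne
  have hM0 : 0 ≤ M := le_trans (Real.sqrt_nonneg _) (hM h₀ hh₀)
  set K : ℝ := Real.exp 1 * (M * γ + 2 * ε₂) / ε₂ with hK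
  have hKpos : 0 < K := by
    apply div_pos _ hε₂
    have h1 : 0 < M * γ + 2 * ε₂ := by nlinarith [mul_nonneg hM0 hγ.le]
    exact mul_pos (Real.exp_pos 1) h1
  by_cases hNtop : covN (L2dist I) (ε₁ / γ) H = ⊤
  · rw [hNtop, ENNReal.mul_top (ENNReal.ofReal_pos.2 hKpos).ne',
      ENNReal.top_pow (by omega)]
    exact le_top
  obtain ⟨F, hFsub, hFcov, hFcard⟩ := covN_attained hNtop
  by_cases hMpos : 0 < M
  swap
  · -- degenerate case `M = 0`: all functions of `H` vanish in `L²`, one center suffices.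
    have hMeq : M = 0 := le_antisymm (not_lt.1 hMpos) hM0
    have hzero : ∀ h ∈ H, eLpNorm h 2 (volume.restrict I) = 0 := by
      intro h hh
      rw [eLpNorm_two_eq_ofReal_sqrt (hH h hh)]
      have h1 := hM h hh
      rw [hMeq] at h1
      have h2 := Real.sqrt_nonneg (∫ x in I, (h x) ^ 2)
      rw [le_antisymm h1 h2, ENNReal.ofReal_zero]
    set g₀ : (Fin k → ℝ) → ℝ := fun x => ∑ i : Fin R, (0:ℝ) * h₀ x with hg₀
    have hcov1 : covN (L2dist I) (ε₁ + ε₂) T ≤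
        (({g₀} : Finset ((Fin k → ℝ) → ℝ)).card : ℝ≥0∞) := by
      refine covN_le_card {g₀} ?_ ?_
      · intro f hf
        rw [Finset.coe_singleton, Set.mem_singleton_iff] at hf
        subst hf
        exact ⟨fun _ => h₀, fun _ => 0, fun _ => hh₀, by simp [hγ.le], rfl⟩
      · intro t ht
        obtain ⟨hs, a, hhH, ha, rfl⟩ := ht
        refine ⟨g₀, Finset.mem_singleton_self _, ?_⟩
        have hu : MemLp (fun x => ∑ i, a i * hs i x) 2 (volume.restrict I) :=
          memLp_finset_sum Finset.univ fun i _ => (hH (hs i) (hhH i)).const_mul (a i)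
        have hg₀' : g₀ = fun x => ∑ i, (0:ℝ) * hs i x := by
          funext x; simp [hg₀]
        have hv : MemLp g₀ 2 (volume.restrict I) := by
          rw [hg₀']
          exact memLp_finset_sum Finset.univ fun i _ => (hH (hs i) (hhH i)).const_mul (0:ℝ)
        have hb := dist_bound (volume.restrict I) a (fun _ => (0:ℝ)) hs hs
          (fun i => hH _ (hhH i)) (fun i => hH _ (hhH i))
        have hb2 : eLpNorm ((fun x => ∑ i, a i * hs i x) - g₀) 2 (volume.restrict I) = 0 := by
          rw [hg₀']
          refine le_antisymm (le_trans hb (le_of_eq ?_)) zero_le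
          refine Finset.sum_eq_zero fun i _ => ?_
          rw [sub_self, eLpNorm_zero, hzero (hs i) (hhH i)]
          simp
        have hconv := eLpNorm_two_eq_ofReal_sqrt (hu.sub hv)
        simp only [Pi.sub_apply] at hconv
        rw [hb2] at hconv
        have hle : L2dist I (fun x => ∑ i, a i * hs i x) g₀ ≤ 0 := by
          rw [L2dist]
          exact ENNReal.ofReal_eq_zero.1 hconv.symm
        have : (0:ℝ) ≤ ε₁ + ε₂ := by linarith
        linarith [hle]
    simp only [Finset.card_singleton, Nat.cast_one] at hcov1
    refine le_trans hcov1 ?_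
    have h1K : (1:ℝ≥0∞) ≤ ENNReal.ofReal K := by
      refine ENNReal.one_le_ofReal.2 ?_
      rw [hK, le_div_iff₀ hε₂]
      nlinarith [mul_nonneg hM0 hγ.le]
    have h1N : (1:ℝ≥0∞) ≤ covN (L2dist I) (ε₁ / γ) H := one_le_covN ⟨h₀, hh₀⟩
    calc (1:ℝ≥0∞) = 1 ^ R := (one_pow R).symm
      _ ≤ (ENNReal.ofReal K * covN (L2dist I) (ε₁ / γ) H) ^ R := by
          gcongr
          calc (1:ℝ≥0∞) = 1 * 1 := (one_mul 1).symm
            _ ≤ _ := mul_le_mul' h1K h1N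
  -- main case `0 < M`
  set r : ℝ := ε₂ / M with hrdef
  have hrpos : 0 < r := div_pos hε₂ hMpos
  have hfin : Module.finrank ℝ (PiLp 1 fun _ : Fin R => ℝ) = R := by
    rw [Module.finrank_eq_card_basis (PiLp.basisFun 1 ℝ (Fin R)), Fintype.card_fin]
  obtain ⟨A, hAsub, hAcov, hAcard⟩ :=
    exists_packing_cover (PiLp 1 fun _ : Fin R => ℝ)
      ((PiLp.basisFun 1 ℝ (Fin R)).addHaar) hγ hrpos
  rw [hfin] at hAcard
  set Gs : Finset ((Fin k → ℝ) → ℝ) :=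
    (A ×ˢ Fintype.piFinset fun _ : Fin R => F).image
      (fun p => fun x => ∑ i, p.1 i * p.2 i x) with hGs
  have hcovT : covN (L2dist I) (ε₁ + ε₂) T ≤ (Gs.card : ℝ≥0∞) := by
    refine covN_le_card Gs ?_ ?_
    · -- the centers belong to the set of combinations
      intro f hf
      obtain ⟨p, hp, rfl⟩ := Finset.mem_image.1 (by exact_mod_cast hf)
      rw [Finset.mem_product] at hp
      refine ⟨fun i => p.2 i, fun i => p.1 i,
        fun i => hFsub (Fintype.mem_piFinset.1 hp.2 i), ?_, rfl⟩
      have := hAsub hp.1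
      rw [mem_closedBall_zero_iff, piLp_one_norm] at this
      exact this
    · -- every combination is close to some center
      rintro t ⟨hs, a, hhH, ha, rfl⟩
      choose c hcF hcdist using fun i => hFcov (hs i) (hhH i)
      set aP : PiLp 1 (fun _ : Fin R => ℝ) := (WithLp.equiv 1 _).symm a with haP
      have haPmem : aP ∈ Metric.closedBall (0 : PiLp 1 (fun _ : Fin R => ℝ)) γ := by
        rw [mem_closedBall_zero_iff, piLp_one_norm]
        simpa [haP] using ha
      obtain ⟨b, hbA, hbdist⟩ := hAcov aP haPmem
      have hbsum : ∑ i, |a i - b i| ≤ r := by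
        have hd : dist aP b = ∑ i, |a i - b i| := by
          rw [dist_eq_norm, piLp_one_norm]
          refine Finset.sum_congr rfl fun i _ => ?_
          rw [PiLp.sub_apply]
          simp [haP]
        rw [hd] at hbdist
        exact hbdist
      refine ⟨fun x => ∑ i, b i * c i x, Finset.mem_image.2
        ⟨(b, c), Finset.mem_product.2 ⟨hbA, Fintype.mem_piFinset.2 hcF⟩, rfl⟩, ?_⟩
      have hu : MemLp (fun x => ∑ i, a i * hs i x) 2 (volume.restrict I) :=
        memLp_finset_sum Finset.univ fun i _ => (hH (hs i) (hhH i)).const_mul (a i)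
      have hv : MemLp (fun x => ∑ i, b i * c i x) 2 (volume.restrict I) :=
        memLp_finset_sum Finset.univ fun i _ => (hH (c i) (hFsub (hcF i))).const_mul (b i)
      have hbd := dist_bound (volume.restrict I) a (fun i => b i) hs c
        (fun i => hH _ (hhH i)) (fun i => hH _ (hFsub (hcF i)))
      have hterm : ∀ i : Fin R, (‖a i‖₊ : ℝ≥0∞) * eLpNorm (hs i - c i) 2 (volume.restrict I)
          + (‖a i - b i‖₊ : ℝ≥0∞) * eLpNorm (c i) 2 (volume.restrict I)
          ≤ ENNReal.ofReal (|a i| * (ε₁/γ) + |a i - b i| * M) := by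
        intro i
        have h1 : eLpNorm (hs i - c i) 2 (volume.restrict I) ≤ ENNReal.ofReal (ε₁/γ) := by
          rw [eLpNorm_two_eq_ofReal_sqrt ((hH _ (hhH i)).sub (hH _ (hFsub (hcF i))))]
          apply ENNReal.ofReal_le_ofReal
          refine le_trans (le_of_eq ?_) (hcdist i)
          rw [L2dist]
          simp only [Pi.sub_apply]
        have h2 : eLpNorm (c i) 2 (volume.restrict I) ≤ ENNReal.ofReal M := by
          rw [eLpNorm_two_eq_ofReal_sqrt (hH _ (hFsub (hcF i)))]
          exact ENNReal.ofReal_le_ofReal (hM _ (hFsub (hcF i)))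
        rw [ENNReal.ofReal_add (by positivity) (by positivity),
          ENNReal.ofReal_mul (abs_nonneg _), ENNReal.ofReal_mul (abs_nonneg _),
          ← Real.enorm_eq_ofReal_abs, ← Real.enorm_eq_ofReal_abs]
        exact add_le_add (mul_le_mul_right h1 _) (mul_le_mul_right h2 _)
      have hsum : ∑ i : Fin R, (|a i| * (ε₁/γ) + |a i - b i| * M) ≤ ε₁ + ε₂ := by
        rw [Finset.sum_add_distrib, ← Finset.sum_mul, ← Finset.sum_mul]
        have t1 : (∑ i, |a i|) * (ε₁/γ) ≤ ε₁ := by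
          calc (∑ i, |a i|) * (ε₁/γ) ≤ γ * (ε₁/γ) :=
                mul_le_mul_of_nonneg_right ha (by positivity)
            _ = ε₁ := by field_simp
        have t2 : (∑ i, |a i - b i|) * M ≤ ε₂ := by
          calc (∑ i, |a i - b i|) * M ≤ r * M :=
                mul_le_mul_of_nonneg_right hbsum hM0
            _ = ε₂ := by rw [hrdef]; field_simp
        linarith
      have hconv := eLpNorm_two_eq_ofReal_sqrt (hu.sub hv)
      simp only [Pi.sub_apply] at hconv
      have hfinal : ENNReal.ofReal
          (L2dist I (fun x => ∑ i, a i * hs i x) (fun x => ∑ i, b i * c i x))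
          ≤ ENNReal.ofReal (ε₁ + ε₂) := by
        rw [L2dist, ← hconv]
        calc eLpNorm ((fun x => ∑ i, a i * hs i x) - fun x => ∑ i, b i * c i x) 2
              (volume.restrict I)
            ≤ ∑ i, ((‖a i‖₊ : ℝ≥0∞) * eLpNorm (hs i - c i) 2 (volume.restrict I)
              + (‖a i - b i‖₊ : ℝ≥0∞) * eLpNorm (c i) 2 (volume.restrict I)) := hbd
          _ ≤ ∑ i, ENNReal.ofReal (|a i| * (ε₁/γ) + |a i - b i| * M) :=
              Finset.sum_le_sum fun i _ => hterm i
          _ = ENNReal.ofReal (∑ i, (|a i| * (ε₁/γ) + |a i - b i| * M)) :=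
              (ENNReal.ofReal_sum_of_nonneg fun i _ => by positivity).symm
          _ ≤ ENNReal.ofReal (ε₁ + ε₂) := ENNReal.ofReal_le_ofReal hsum
      exact (ENNReal.ofReal_le_ofReal_iff (by positivity)).1 hfinal
  refine le_trans hcovT ?_
  have h1 : Gs.card ≤ A.card * F.card ^ R := by
    refine le_trans Finset.card_image_le ?_
    rw [Finset.card_product, Fintype.card_piFinset]
    simp [Finset.prod_const]
  calc (Gs.card : ℝ≥0∞) ≤ ((A.card * F.card ^ R : ℕ) : ℝ≥0∞) := by exact_mod_cast h1
    _ = (A.card : ℝ≥0∞) * (F.card : ℝ≥0∞) ^ R := by push_cast; ring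
    _ ≤ ENNReal.ofReal K ^ R * (covN (L2dist I) (ε₁ / γ) H) ^ R := by
        refine mul_le_mul' ?_ ?_
        · rw [← ENNReal.ofReal_natCast, ← ENNReal.ofReal_pow hKpos.le]
          apply ENNReal.ofReal_le_ofReal
          refine le_trans hAcard ?_
          refine pow_le_pow_left₀ (by positivity) ?_ R
          have hre : (2*γ + r)/r = (2*γ*M + ε₂)/ε₂ := by
            rw [hrdef]; field_simp
          rw [hre, hK, div_le_div_iff₀ hε₂ hε₂]
          nlinarith [mul_nonneg hM0 hγ.le, mul_pos hε₂ hε₂,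
            mul_nonneg (mul_nonneg hM0 hγ.le) hε₂.le]
        · rw [hFcard]
    _ = (ENNReal.ofReal K * covN (L2dist I) (ε₁ / γ) H) ^ R := (mul_pow _ _ _).symm
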